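/- Let R be a locally unital algebra with a system of mutually orthogonal idempotents {1_X : X ∈ I}, so R = ⊕_{X,Y} 1_Y R 1_X. Set R_diag = ⊕_X 1_X R 1_X and [R,R]_diag = ∑_{X,Y} [1_X R 1_Y, 1_Y R 1_X]. Then the inclusion R_diag ↪ R induces a linear isomorphism R_diag/[R,R]_diag ≅ R/[R,R]. -/

import Mathlib

/-- For a locally unital algebra `R` with mutually orthogonal idempotents `{1_X}` such that
`R = ⊕_{X,Y} 1_X R 1_Y`, the inclusion `R_diag ↪ R` induces a linear isomorphism
`R_diag/[R,R]_diag ≅ R/[R,R]`. -/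
theorem stmt15 {k R I : Type*} [Field k] [NonUnitalRing R]
    [Module k R] [SMulCommClass k R R] [IsScalarTower k R R] [DecidableEq I]
    (e : I → R)
    (horth : ∀ X Y : I, e X * e Y = if X = Y then e X else 0)
    (S : I → I → Submodule k R)
    (hS : ∀ X Y, S X Y = LinearMap.range
      ((LinearMap.mulLeft k (e X)).comp (LinearMap.mulRight k (e Y))))
    (hdecomp : DirectSum.IsInternal (fun p : I × I => S p.1 p.2))
    (Rdiag : Submodule k R) (hRdiag : Rdiag = ⨆ X : I, S X X)
    (T : Submodule k R)
    (hT : T = Submodule.span k {x : R | ∃ a b : R, x = a * b - b * a})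
    (Tdiag : Submodule k R)
    (hTdiag : Tdiag = Submodule.span k
      {x : R | ∃ (X Y : I) (a b : R), a ∈ S X Y ∧ b ∈ S Y X ∧ x = a * b - b * a}) :
    ∃ φ : (↥Rdiag ⧸ Tdiag.comap Rdiag.subtype) ≃ₗ[k] (R ⧸ T),
      ∀ x : Rdiag, φ (Submodule.Quotient.mk x) = Submodule.Quotient.mk (x : R) := by
  classical
  -- basic facts about the pieces S X Y
  have hmem : ∀ (X Y : I) (x : R), x ∈ S X Y ↔ ∃ r : R, e X * (r * e Y) = x := by
    intro X Y x
    rw [hS]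
    simp [LinearMap.mem_range]
  have hleft : ∀ (X Y : I) (x : R), x ∈ S X Y → e X * x = x := by
    intro X Y x hx
    obtain ⟨r, rfl⟩ := (hmem X Y x).1 hx
    rw [← mul_assoc, ← mul_assoc, horth, if_pos rfl, mul_assoc]
  have hright : ∀ (X Y : I) (x : R), x ∈ S X Y → x * e Y = x := by
    intro X Y x hx
    obtain ⟨r, rfl⟩ := (hmem X Y x).1 hx
    rw [mul_assoc, mul_assoc, horth, if_pos rfl]
  have hmul_ne : ∀ (X Y Z W : I), Y ≠ Z → ∀ x ∈ S X Y, ∀ y ∈ S Z W, x * y = 0 := by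
    intro X Y Z W hYZ x hx y hy
    rw [← hright X Y x hx, ← hleft Z W y hy, mul_assoc, ← mul_assoc (e Y), horth,
      if_neg hYZ, zero_mul, mul_zero]
  have hmul_mem : ∀ (X Y W : I), ∀ x ∈ S X Y, ∀ y ∈ S Y W, x * y ∈ S X W := by
    intro X Y W x hx y hy
    refine (hmem X W _).2 ⟨x * y, ?_⟩
    rw [mul_assoc x y, hright Y W y hy, ← mul_assoc, hleft X Y x hx]
  have hoffT : ∀ (X Y : I), X ≠ Y → ∀ x ∈ S X Y, x ∈ T := by
    intro X Y hXY x hx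
    have h1 : e X * x = x := hleft X Y x hx
    have h2 : x * e X = 0 := by
      rw [← hright X Y x hx, mul_assoc, horth, if_neg (fun h => hXY h.symm), mul_zero]
    rw [hT]
    exact Submodule.subset_span ⟨e X, x, by rw [h1, h2, sub_zero]⟩
  -- the projection π onto the diagonal part
  set S' : I × I → Submodule k R := fun p => S p.1 p.2 with hS'def
  set dec : R ≃ₗ[k] DirectSum (I × I) fun p => S' p :=
    (LinearEquiv.ofBijective (DirectSum.coeLinearMap S') hdecomp).symm with hdec
  set f : ∀ p : I × I, S' p →ₗ[k] R :=
    fun p => if p.1 = p.2 then (S' p).subtype else 0 with hf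
  set π : R →ₗ[k] R := (DirectSum.toModule k (I × I) R f).comp dec.toLinearMap with hπ
  have hdecx : ∀ (p : I × I) (x : R) (hx : x ∈ S' p),
      dec x = DirectSum.lof k (I × I) (fun p => S' p) p ⟨x, hx⟩ := by
    intro p x hx
    apply dec.symm.injective
    rw [LinearEquiv.symm_apply_apply, hdec, LinearEquiv.symm_symm]
    rw [DirectSum.lof_eq_of]
    exact (DirectSum.coeLinearMap_of S' p ⟨x, hx⟩).symm
  have hπdiag : ∀ (X : I) (x : R), x ∈ S X X → π x = x := by
    intro X x hx
    rw [hπ, LinearMap.comp_apply, LinearEquiv.coe_coe,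
      hdecx (X, X) x hx, DirectSum.toModule_lof]
    simp [hf]
  have hπoff : ∀ (X Y : I), X ≠ Y → ∀ x ∈ S X Y, π x = 0 := by
    intro X Y hXY x hx
    rw [hπ, LinearMap.comp_apply, LinearEquiv.coe_coe,
      hdecx (X, Y) x hx, DirectSum.toModule_lof]
    simp [hf, hXY]
  -- π maps into Rdiag
  have hπRdiag : ∀ x : R, π x ∈ Rdiag := by
    intro x
    rw [hπ, LinearMap.comp_apply]
    induction dec x using DirectSum.induction_on with
    | zero => simpa using Rdiag.zero_mem
    | of p v =>
      obtain ⟨X, Y⟩ := p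
      rw [← DirectSum.lof_eq_of k, DirectSum.toModule_lof]
      by_cases hp : X = Y
      · subst hp
        have : f (X, X) v = (v : R) := by simp [hf]
        rw [this, hRdiag]
        exact Submodule.mem_iSup_of_mem X v.2
      · have : f (X, Y) v = 0 := by simp [hf, hp]
        rw [this]
        exact Rdiag.zero_mem
    | add x y hx hy =>
      rw [map_add]
      exact Rdiag.add_mem hx hy
  -- x - π x ∈ T
  have haux : ∀ y : DirectSum (I × I) fun p => S' p,
      DirectSum.coeLinearMap S' y - DirectSum.toModule k (I × I) R f y ∈ T := by
    intro y
    induction y using DirectSum.induction_on with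
    | zero => simpa using T.zero_mem
    | of p v =>
      obtain ⟨X, Y⟩ := p
      rw [← DirectSum.lof_eq_of k, DirectSum.toModule_lof, DirectSum.lof_eq_of,
        DirectSum.coeLinearMap_of]
      by_cases hp : X = Y
      · subst hp
        have : f (X, X) v = (v : R) := by simp [hf]
        rw [this]
        simpa using T.zero_mem
      · have : f (X, Y) v = 0 := by simp [hf, hp]
        rw [this, sub_zero]
        exact hoffT X Y hp v v.2
    | add x y hx hy =>
      rw [map_add, map_add]
      have : DirectSum.coeLinearMap S' x + DirectSum.coeLinearMap S' y -
          (DirectSum.toModule k (I × I) R f x + DirectSum.toModule k (I × I) R f y)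
          = (DirectSum.coeLinearMap S' x - DirectSum.toModule k (I × I) R f x) +
            (DirectSum.coeLinearMap S' y - DirectSum.toModule k (I × I) R f y) := by abel
      rw [this]
      exact T.add_mem hx hy
  have hπT : ∀ x : R, x - π x ∈ T := by
    intro x
    have hx : DirectSum.coeLinearMap S' (dec x) = x := by
      rw [hdec]
      exact (LinearEquiv.ofBijective (DirectSum.coeLinearMap S') hdecomp).apply_symm_apply x
    have := haux (dec x)
    rw [hx] at this
    rw [hπ, LinearMap.comp_apply, LinearEquiv.coe_coe]
    exact this
  -- π is the identity on Rdiag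
  have hπid : ∀ x ∈ Rdiag, π x = x := by
    intro x hx
    rw [hRdiag] at hx
    refine Submodule.iSup_induction (motive := fun x => π x = x) _ hx ?_ (map_zero π) ?_
    · intro X y hy
      exact hπdiag X y hy
    · intro a b ha hb
      rw [map_add, ha, hb]
  -- π maps T into Tdiag
  have hcomm : ∀ a b : R, π (a * b - b * a) ∈ Tdiag := by
    intro a b
    have ha : a ∈ ⨆ p : I × I, S' p := by
      rw [hdecomp.submodule_iSup_eq_top]; trivial
    refine Submodule.iSup_induction (motive := fun a => ∀ b : R, π (a * b - b * a) ∈ Tdiag)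
      _ ha ?_ ?_ ?_ b
    · rintro ⟨X, Y⟩ a ha b
      have hb : b ∈ ⨆ p : I × I, S' p := by
        rw [hdecomp.submodule_iSup_eq_top]; trivial
      refine Submodule.iSup_induction (motive := fun b => π (a * b - b * a) ∈ Tdiag)
        _ hb ?_ ?_ ?_
      · rintro ⟨Z, W⟩ c hc
        have ha' : a ∈ S X Y := ha
        have hc' : c ∈ S Z W := hc
        by_cases hYZ : Y = Z
        · rw [← hYZ] at hc'
          by_cases hWX : W = X
          · rw [hWX] at hc'
            have hd : a * c - c * a ∈ Rdiag := by
              rw [hRdiag]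
              exact Submodule.sub_mem _
                (Submodule.mem_iSup_of_mem X (hmul_mem X Y X a ha' c hc'))
                (Submodule.mem_iSup_of_mem Y (hmul_mem Y X Y c hc' a ha'))
            rw [hπid _ hd, hTdiag]
            exact Submodule.subset_span ⟨X, Y, a, c, ha', hc', rfl⟩
          · have h1 : c * a = 0 := hmul_ne Y W X Y (fun h => hWX h) c hc' a ha'
            have h2 : a * c ∈ S X W := hmul_mem X Y W a ha' c hc'
            rw [h1, sub_zero, hπoff X W (fun h => hWX h.symm) _ h2]
            exact Tdiag.zero_mem
        · have h1 : a * c = 0 := hmul_ne X Y Z W hYZ a ha' c hc'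
          by_cases hWX : W = X
          · rw [hWX] at hc'
            have h2 : c * a ∈ S Z Y := hmul_mem Z X Y c hc' a ha'
            rw [h1, zero_sub, map_neg, hπoff Z Y (fun h => hYZ h.symm) _ h2, neg_zero]
            exact Tdiag.zero_mem
          · have h2 : c * a = 0 := hmul_ne Z W X Y (fun h => hWX h) c hc' a ha'
            rw [h1, h2, sub_zero, map_zero]
            exact Tdiag.zero_mem
      · simpa using Tdiag.zero_mem
      · intro x y hx hy
        have : a * (x + y) - (x + y) * a = (a * x - x * a) + (a * y - y * a) := by
          rw [mul_add, add_mul]; abel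
        rw [this, map_add]
        exact Tdiag.add_mem hx hy
    · intro b
      simpa using Tdiag.zero_mem
    · intro x y hx hy b
      have : (x + y) * b - b * (x + y) = (x * b - b * x) + (y * b - b * y) := by
        rw [mul_add, add_mul]; abel
      rw [this, map_add]
      exact Tdiag.add_mem (hx b) (hy b)
  have hπTdiag : ∀ t ∈ T, π t ∈ Tdiag := by
    intro t ht
    rw [hT] at ht
    induction ht using Submodule.span_induction with
    | mem x hx =>
      obtain ⟨a, b, rfl⟩ := hx
      exact hcomm a b
    | zero => rw [map_zero]; exact Tdiag.zero_mem
    | add x y hx hy ihx ihy => rw [map_add]; exact Tdiag.add_mem ihx ihy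
    | smul c x hx ihx => rw [map_smul]; exact Tdiag.smul_mem c ihx
  -- key : Rdiag ∩ T ⊆ Tdiag
  have hkey : ∀ x ∈ Rdiag, x ∈ T → x ∈ Tdiag := by
    intro x hx hxT
    rw [← hπid x hx]
    exact hπTdiag x hxT
  -- Tdiag ≤ T
  have hTle : Tdiag ≤ T := by
    rw [hTdiag]
    refine Submodule.span_le.2 ?_
    rintro x ⟨X, Y, a, b, -, -, rfl⟩
    rw [hT]
    exact Submodule.subset_span ⟨a, b, rfl⟩
  -- build the map
  set P : Submodule k Rdiag := Tdiag.comap Rdiag.subtype with hP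
  have hPT : P ≤ T.comap Rdiag.subtype := fun x hx => hTle hx
  set g : (Rdiag ⧸ P) →ₗ[k] R ⧸ T := Submodule.mapQ P T Rdiag.subtype hPT with hg
  have hgmk : ∀ x : Rdiag, g (Submodule.Quotient.mk x) = Submodule.Quotient.mk (x : R) := by
    intro x
    rw [hg, Submodule.mapQ_apply]
    rfl
  have hinj : Function.Injective g := by
    rw [← LinearMap.ker_eq_bot, LinearMap.ker_eq_bot']
    intro q hq
    obtain ⟨x, rfl⟩ := Submodule.Quotient.mk_surjective P q
    rw [hgmk] at hq
    have hxT : (x : R) ∈ T := (Submodule.Quotient.mk_eq_zero T).1 hq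
    have : (x : R) ∈ Tdiag := hkey x x.2 hxT
    exact (Submodule.Quotient.mk_eq_zero P).2 this
  have hsurj : Function.Surjective g := by
    intro q
    obtain ⟨r, rfl⟩ := Submodule.Quotient.mk_surjective T q
    refine ⟨Submodule.Quotient.mk ⟨π r, hπRdiag r⟩, ?_⟩
    rw [hgmk]
    refine (Submodule.Quotient.eq T).2 ?_
    have := hπT r
    simpa using T.neg_mem this
  exact ⟨LinearEquiv.ofBijective g ⟨hinj, hsurj⟩, hgmk⟩
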